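/- Let T be a finite tree and let 𝒞 be the set of rooted circuits of the edge-shelling convex geometry of T. For distinct edges x, y of T and an edge z with z ∉ {x, y}, one has ({x,y}, z) ∈ 𝒞 if and only if z lies on the path between x and y in T, i.e., there exists a path P in T whose first edge is x, whose last edge is y, and which contains z among its edges. -/

import Mathlib

open Set

variable {α : Type*}

/-- A closure system on a ground set `E`: a family of subsets of `E` containing `E`
and closed under pairwise intersection. -/
def IsClosureSystem (E : Set α) (K : Set (Set α)) : Prop :=
  (∀ A ∈ K, A ⊆ E) ∧ E ∈ K ∧ ∀ A ∈ K, ∀ B ∈ K, A ∩ B ∈ K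

/-- The closure operator `τ(X) = ⋂ {A ∈ K : X ⊆ A}`. -/
def closureOp (K : Set (Set α)) (X : Set α) : Set α :=
  ⋂₀ {A | A ∈ K ∧ X ⊆ A}

/-- The extreme operator `ex(X) = {x ∈ X : x ∉ τ(X \ {x})}`. -/
def extremeOp (K : Set (Set α)) (X : Set α) : Set α :=
  {x | x ∈ X ∧ x ∉ closureOp K (X \ {x})}

/-- A rooted circuit `(X, e)` of a closure system `K` on ground set `E`:
`e ∉ X` and `X` is minimal under inclusion with `e ∈ τ(X)`. -/
def IsRootedCircuit (E : Set α) (K : Set (Set α)) (X : Set α) (e : α) : Prop :=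
  X ⊆ E ∧ e ∈ E ∧ e ∉ X ∧ e ∈ closureOp K X ∧
    ∀ Y ⊆ X, e ∈ closureOp K Y → Y = X

/-- A convex geometry: a closure system in which every nonempty closed set has a
nonempty extreme set. -/
def IsConvexGeometry (E : Set α) (K : Set (Set α)) : Prop :=
  IsClosureSystem E K ∧ ∀ X ∈ K, X.Nonempty → (extremeOp K X).Nonempty

/-- A convex geometry has stem size 2 if every rooted circuit has stem of size 2. -/
def StemSize2 (E : Set α) (K : Set (Set α)) : Prop :=
  ∀ X e, IsRootedCircuit E K X e → X.ncard = 2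

/-- `F` is the edge set of a subtree (connected subgraph) of `G`, where the empty
set is included. -/
def IsSubtreeEdgeSet {V : Type*} (G : SimpleGraph V) (F : Set (Sym2 V)) : Prop :=
  F = ∅ ∨ ∃ H : G.Subgraph, H.Connected ∧ H.edgeSet = F

/-- The edge-shelling convex geometry of a graph: the family of edge sets of subtrees. -/
def edgeShelling {V : Type*} (G : SimpleGraph V) : Set (Set (Sym2 V)) :=
  {F | IsSubtreeEdgeSet G F}

open SimpleGraph

lemma closureOp_subset {K : Set (Set α)} {X A : Set α} (hA : A ∈ K) (hXA : X ⊆ A) :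
    closureOp K X ⊆ A :=
  Set.sInter_subset_of_mem ⟨hA, hXA⟩

section Aux

variable {V : Type*} {G : SimpleGraph V}

lemma sym2_exists_rep (x : Sym2 V) : ∃ u u', x = s(u, u') := by
  induction x using Sym2.ind with
  | _ u u' => exact ⟨u, u', rfl⟩

/-- In a path, an edge containing the first vertex must be the first edge. -/
lemma head_edge_of_mem {a b : V} {p : G.Walk a b} (hp : p.IsPath) {x : Sym2 V}
    (hxe : x ∈ p.edges) (hax : a ∈ x) : p.edges.head? = some x := by
  cases p with
  | nil => simp at hxe
  | cons h q =>
    rw [Walk.cons_isPath_iff] at hp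
    rw [Walk.edges_cons] at hxe ⊢
    rw [List.mem_cons] at hxe
    rcases hxe with rfl | hxq
    · rfl
    · exfalso
      obtain ⟨t, rfl⟩ := Sym2.mem_iff_exists.mp hax
      exact hp.2 (q.fst_mem_support_of_mem_edges hxq)

/-- In a path, an edge containing the last vertex must be the last edge. -/
lemma last_edge_of_mem {a b : V} {p : G.Walk a b} (hp : p.IsPath) {y : Sym2 V}
    (hye : y ∈ p.edges) (hby : b ∈ y) : p.edges.getLast? = some y := by
  have h := head_edge_of_mem (p := p.reverse) hp.reverse
    (by rw [Walk.edges_reverse]; simpa using hye) hby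
  rwa [Walk.edges_reverse, List.head?_reverse] at h

/-- Given an edge `s(u,u')` and a vertex `w` of a tree, some path from an endpoint of the
edge to `w` contains the edge. -/
lemma exists_path_edge_start [DecidableEq V] (hG : G.IsTree) {u u' : V} (h : G.Adj u u') (w : V) :
    ∃ (c : V) (p : G.Walk c w), p.IsPath ∧ (c = u ∨ c = u') ∧ s(u, u') ∈ p.edges := by
  obtain ⟨p, hp, -⟩ := hG.existsUnique_path u w
  by_cases hu' : u' ∈ p.support
  · refine ⟨u, p, hp, Or.inl rfl, ?_⟩
    have hedge : (Walk.cons h Walk.nil : G.Walk u u').IsPath := by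
      rw [Walk.cons_isPath_iff]
      simp [h.ne]
    have heq := (hG.existsUnique_path u u').unique (hp.takeUntil hu') hedge
    have hmem : s(u, u') ∈ (p.takeUntil u' hu').edges := by
      rw [heq]; simp
    exact p.edges_takeUntil_subset hu' hmem
  · refine ⟨u', Walk.cons h.symm p, hp.cons hu', Or.inr rfl, ?_⟩
    rw [Walk.edges_cons, Sym2.eq_swap]
    exact List.mem_cons_self

/-- Given a path in a tree containing an edge `x`, it can be modified at its end so that it
also contains a given edge `s(v,v')` at the end. -/
lemma exists_path_edge_end [DecidableEq V] (hG : G.IsTree) {c v v' : V} {p : G.Walk c v} (hp : p.IsPath)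
    (h : G.Adj v v') {x : Sym2 V} (hxp : x ∈ p.edges) :
    ∃ (d : V) (q : G.Walk c d), q.IsPath ∧ (d = v ∨ d = v') ∧ x ∈ q.edges ∧
      s(v, v') ∈ q.edges := by
  by_cases hv' : v' ∈ p.support
  · refine ⟨v, p, hp, Or.inl rfl, hxp, ?_⟩
    have hedge : (Walk.cons h.symm Walk.nil : G.Walk v' v).IsPath := by
      rw [Walk.cons_isPath_iff]
      simp [h.ne']
    have heq := (hG.existsUnique_path v' v).unique (hp.dropUntil hv') hedge
    have hmem : s(v, v') ∈ (p.dropUntil v' hv').edges := by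
      rw [heq]; simp [Sym2.eq_swap]
    exact p.edges_dropUntil_subset hv' hmem
  · refine ⟨v', p.concat h, ?_, Or.inr rfl, ?_, ?_⟩
    · rw [← Walk.isPath_reverse_iff, Walk.reverse_concat]
      exact hp.reverse.cons (by simpa [Walk.support_reverse] using hv')
    · rw [Walk.edges_concat]
      simp [hxp]
    · rw [Walk.edges_concat]
      simp

/-- In a tree, for two distinct edges there is a path starting with one and ending with
the other. -/
lemma exists_path_two_edges [DecidableEq V] (hG : G.IsTree) {u u' v v' : V} (hx : G.Adj u u')
    (hy : G.Adj v v') :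
    ∃ (a b : V) (p : G.Walk a b), p.IsPath ∧ (a = u ∨ a = u') ∧ (b = v ∨ b = v') ∧
      s(u, u') ∈ p.edges ∧ s(v, v') ∈ p.edges := by
  obtain ⟨c, p, hp, hc, hxp⟩ := exists_path_edge_start hG hx v
  obtain ⟨d, q, hq, hd, hxq, hyq⟩ := exists_path_edge_end hG hp hy hxp
  exact ⟨c, d, q, hq, hc, hd, hxq, hyq⟩

lemma start_mem_verts {H : G.Subgraph} {a b : V} (p : G.Walk a b) {x : Sym2 V}
    (hh : p.edges.head? = some x) (hxH : x ∈ H.edgeSet) : a ∈ H.verts := by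
  cases p with
  | nil => simp at hh
  | cons h q =>
    rw [Walk.edges_cons] at hh
    simp only [List.head?_cons, Option.some.injEq] at hh
    subst hh
    exact H.edge_vert (Subgraph.mem_edgeSet.mp hxH)

lemma map_edge_mem_of_mem_coe {H : G.Subgraph} (e : Sym2 H.verts)
    (he : e ∈ H.coe.edgeSet) : Sym2.map H.hom e ∈ H.edgeSet := by
  induction e using Sym2.ind with
  | _ p q =>
    rw [Sym2.map_pair_eq]
    rw [SimpleGraph.mem_edgeSet] at he
    exact Subgraph.mem_edgeSet.mpr he

/-- Any edge of a path with first edge `x` and last edge `y` lies in the closure of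
`{x, y}` in the edge-shelling closure system of a tree. -/
lemma mem_closure_pair [DecidableEq V] (hG : G.IsTree) {a b : V} {p : G.Walk a b} (hp : p.IsPath)
    {x y z : Sym2 V} (hhead : p.edges.head? = some x) (hlast : p.edges.getLast? = some y)
    (hzp : z ∈ p.edges) : z ∈ closureOp (edgeShelling G) {x, y} := by
  rw [closureOp, Set.mem_sInter]
  rintro A ⟨hA, hsub⟩
  rcases hA with rfl | ⟨H, hconn, rfl⟩
  · exact absurd (hsub (Set.mem_insert x {y})) (Set.notMem_empty x)
  · have hxH : x ∈ H.edgeSet := hsub (by simp)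
    have hyH : y ∈ H.edgeSet := hsub (by simp)
    have ha : a ∈ H.verts := start_mem_verts p hhead hxH
    have hb : b ∈ H.verts := by
      refine start_mem_verts p.reverse ?_ hyH
      rw [Walk.edges_reverse, List.head?_reverse]
      exact hlast
    obtain ⟨w⟩ := hconn.coe.preconnected ⟨a, ha⟩ ⟨b, hb⟩
    have hpw : p = (w.map H.hom : G.Walk a b).bypass :=
      (hG.existsUnique_path a b).unique hp (Walk.bypass_isPath _)
    have hz' : z ∈ (w.map H.hom : G.Walk a b).edges :=
      Walk.edges_bypass_subset _ (hpw ▸ hzp)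
    rw [Walk.edges_map] at hz'
    obtain ⟨e, he, rfl⟩ := List.mem_map.mp hz'
    exact map_edge_mem_of_mem_coe e (w.edges_subset_edgeSet he)

lemma singleton_mem_edgeShelling {u u' : V} (h : G.Adj u u') :
    ({s(u, u')} : Set (Sym2 V)) ∈ edgeShelling G :=
  Or.inr ⟨G.subgraphOfAdj h, Subgraph.subgraphOfAdj_connected h, G.edgeSet_subgraphOfAdj h⟩

end Aux

theorem stmt8 {V : Type*} [Fintype V] [Nonempty V] (G : SimpleGraph V) (hG : G.IsTree)
    (x y z : Sym2 V) (hx : x ∈ G.edgeSet) (hy : y ∈ G.edgeSet) (hz : z ∈ G.edgeSet)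
    (hxy : x ≠ y) (hzx : z ≠ x) (hzy : z ≠ y) :
    IsRootedCircuit G.edgeSet (edgeShelling G) {x, y} z ↔
      ∃ (a b : V) (p : G.Walk a b), p.IsPath ∧ p.edges.head? = some x ∧
        p.edges.getLast? = some y ∧ z ∈ p.edges := by
  classical
  obtain ⟨u, u', rfl⟩ := sym2_exists_rep x
  obtain ⟨v, v', rfl⟩ := sym2_exists_rep y
  have hxadj : G.Adj u u' := by rwa [← SimpleGraph.mem_edgeSet]
  have hyadj : G.Adj v v' := by rwa [← SimpleGraph.mem_edgeSet]
  constructor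
  · rintro ⟨-, -, -, hzc, -⟩
    obtain ⟨a, b, p, hp, ha, hb, hxp, hyp⟩ := exists_path_two_edges hG hxadj hyadj
    have hhead := head_edge_of_mem hp hxp (Sym2.mem_iff.mpr ha)
    have hlast := last_edge_of_mem hp hyp (Sym2.mem_iff.mpr hb)
    refine ⟨a, b, p, hp, hhead, hlast, ?_⟩
    have hmem : {e | e ∈ p.edges} ∈ edgeShelling G :=
      Or.inr ⟨p.toSubgraph, p.toSubgraph_connected, p.edgeSet_toSubgraph⟩
    have hsub : ({s(u, u'), s(v, v')} : Set (Sym2 V)) ⊆ {e | e ∈ p.edges} := by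
      intro e he
      simp only [Set.mem_insert_iff, Set.mem_singleton_iff] at he
      rcases he with rfl | rfl
      · exact hxp
      · exact hyp
    exact closureOp_subset hmem hsub hzc
  · rintro ⟨a, b, p, hp, hhead, hlast, hzp⟩
    refine ⟨?_, hz, ?_, mem_closure_pair hG hp hhead hlast hzp, ?_⟩
    · exact Set.insert_subset_iff.mpr ⟨hx, Set.singleton_subset_iff.mpr hy⟩
    · intro hmem
      simp only [Set.mem_insert_iff, Set.mem_singleton_iff] at hmem
      rcases hmem with rfl | rfl
      · exact hzx rfl
      · exact hzy rfl
    · intro Y hY hzY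
      have hxY : s(u, u') ∈ Y := by
        by_contra hxn
        have hsubY : Y ⊆ {s(v, v')} := by
          intro e he
          have h2 := hY he
          simp only [Set.mem_insert_iff, Set.mem_singleton_iff] at h2 ⊢
          rcases h2 with rfl | rfl
          · exact absurd he hxn
          · rfl
        have hmem : z ∈ ({s(v, v')} : Set (Sym2 V)) :=
          closureOp_subset (singleton_mem_edgeShelling hyadj) hsubY hzY
        exact hzy (by simpa using hmem)
      have hyY : s(v, v') ∈ Y := by
        by_contra hyn
        have hsubY : Y ⊆ {s(u, u')} := by
          intro e he
          have h2 := hY he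
          simp only [Set.mem_insert_iff, Set.mem_singleton_iff] at h2 ⊢
          rcases h2 with rfl | rfl
          · rfl
          · exact absurd he hyn
        have hmem : z ∈ ({s(u, u')} : Set (Sym2 V)) :=
          closureOp_subset (singleton_mem_edgeShelling hxadj) hsubY hzY
        exact hzx (by simpa using hmem)
      exact Set.Subset.antisymm hY
        (Set.insert_subset_iff.mpr ⟨hxY, Set.singleton_subset_iff.mpr hyY⟩)
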